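/- Let A_opt ≻ 0 symmetric, A_opt x_opt = -g, x̃_k in a subspace with orthonormal basis Q_k, and r̃_k = A_opt x̃_k + g with Q_k^T r̃_k = 0. Then ||x_opt||^2 - ||x̃_k||^2 ≤ 2 ||A_opt^{-1} x_opt|| · ||r̃_k|| · sin∠(A_opt^{-1}x_opt, range(Q_k)), where sin∠(p, range(Q_k)) = ||(I-Q_kQ_k^T)p||/||p||. -/

import Mathlib

open Matrix

lemma cs_dot {n : ℕ} (a b : Fin n → ℝ) :
    a ⬝ᵥ b ≤ Real.sqrt (a ⬝ᵥ a) * Real.sqrt (b ⬝ᵥ b) := by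
  have h := Real.sum_mul_le_sqrt_mul_sqrt Finset.univ a b
  simp only [dotProduct, ← sq]
  simpa using h

lemma dot_self_nonneg {n : ℕ} (a : Fin n → ℝ) : 0 ≤ a ⬝ᵥ a :=
  Finset.sum_nonneg fun i _ => mul_self_nonneg _

theorem stmt14 {n k : ℕ} (Aopt : Matrix (Fin n) (Fin n) ℝ)
    (hpd : Aopt.PosDef)
    (g xopt : Fin n → ℝ) (heq : Aopt.mulVec xopt = -g)
    (Q : Matrix (Fin n) (Fin k) ℝ) (hQ : Qᵀ * Q = 1)
    (xt : Fin n → ℝ) (hxt : ∃ c, xt = Q.mulVec c)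
    (rt : Fin n → ℝ) (hrt : rt = Aopt.mulVec xt + g)
    (horth : Qᵀ.mulVec rt = 0) :
    xopt ⬝ᵥ xopt - xt ⬝ᵥ xt ≤
      2 * Real.sqrt (Aopt⁻¹.mulVec xopt ⬝ᵥ Aopt⁻¹.mulVec xopt) *
        Real.sqrt (rt ⬝ᵥ rt) *
        (Real.sqrt ((Aopt⁻¹.mulVec xopt - (Q * Qᵀ).mulVec (Aopt⁻¹.mulVec xopt)) ⬝ᵥ
            (Aopt⁻¹.mulVec xopt - (Q * Qᵀ).mulVec (Aopt⁻¹.mulVec xopt))) /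
          Real.sqrt (Aopt⁻¹.mulVec xopt ⬝ᵥ Aopt⁻¹.mulVec xopt)) := by
  have hinv : Aopt⁻¹ * Aopt = 1 := Matrix.nonsing_inv_mul _ (isUnit_iff_ne_zero.mpr hpd.det_pos.ne')
  have hsymm : Aoptᵀ = Aopt := hpd.isHermitian.eq
  have hinvsymm : (Aopt⁻¹)ᵀ = Aopt⁻¹ := by
    rw [Matrix.transpose_nonsing_inv, hsymm]
  set p := Aopt⁻¹.mulVec xopt with hp
  set s := p - (Q * Qᵀ).mulVec p with hs
  -- rt = A (xt - xopt)
  have hrt2 : rt = Aopt.mulVec (xt - xopt) := by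
    rw [hrt, Matrix.mulVec_sub, heq]
    abel
  -- w := A⁻¹ rt = xt - xopt
  have hw : Aopt⁻¹.mulVec rt = xt - xopt := by
    rw [hrt2, Matrix.mulVec_mulVec, hinv, Matrix.one_mulVec]
  set w := Aopt⁻¹.mulVec rt with hwdef
  have hxt2 : xt = xopt + w := by rw [hw]; abel
  -- xopt ⬝ w = p ⬝ rt
  have hx_w : xopt ⬝ᵥ w = p ⬝ᵥ rt := by
    rw [hwdef, Matrix.dotProduct_mulVec, hp, ← Matrix.mulVec_transpose, hinvsymm]
  -- key expansion
  have hexp : xopt ⬝ᵥ xopt - xt ⬝ᵥ xt = -2 * (p ⬝ᵥ rt) - w ⬝ᵥ w := by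
    rw [hxt2]
    simp only [dotProduct_add, add_dotProduct]
    rw [dotProduct_comm w xopt, hx_w]
    ring
  -- p ⬝ rt = s ⬝ rt since (QQᵀp) ⬝ rt = 0
  have hQpart : (Q * Qᵀ).mulVec p ⬝ᵥ rt = 0 := by
    rw [← Matrix.mulVec_mulVec, dotProduct_comm, Matrix.dotProduct_mulVec,
      ← Matrix.mulVec_transpose, horth]
    simp
  have hps : p ⬝ᵥ rt = s ⬝ᵥ rt := by
    rw [hs, sub_dotProduct, hQpart, sub_zero]
  -- bound
  have hcs : -(s ⬝ᵥ rt) ≤ Real.sqrt (s ⬝ᵥ s) * Real.sqrt (rt ⬝ᵥ rt) := by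
    have := cs_dot (-s) rt
    simpa [neg_dotProduct, dotProduct_neg] using this
  have hbound : xopt ⬝ᵥ xopt - xt ⬝ᵥ xt ≤
      2 * (Real.sqrt (rt ⬝ᵥ rt) * Real.sqrt (s ⬝ᵥ s)) := by
    rw [hexp, hps]
    have hww := dot_self_nonneg w
    nlinarith [hcs]
  -- case on p = 0
  rcases eq_or_ne (Real.sqrt (p ⬝ᵥ p)) 0 with hz | hz
  · have hpp : p ⬝ᵥ p = 0 :=
      le_antisymm (Real.sqrt_eq_zero'.mp hz) (dot_self_nonneg p)
    have hp0 : p = 0 := dotProduct_self_eq_zero.mp hpp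
    have hs0 : s = 0 := by rw [hs, hp0]; simp
    have : Real.sqrt (s ⬝ᵥ s) = 0 := by rw [hs0]; simp
    rw [hz]
    rw [hs0] at hbound ⊢
    simp only [this, mul_zero, zero_mul] at hbound ⊢
    simpa using hbound
  · have hr : 2 * Real.sqrt (p ⬝ᵥ p) * Real.sqrt (rt ⬝ᵥ rt) *
        (Real.sqrt (s ⬝ᵥ s) / Real.sqrt (p ⬝ᵥ p)) =
        2 * (Real.sqrt (rt ⬝ᵥ rt) * Real.sqrt (s ⬝ᵥ s)) := by
      field_simp
    rw [hr]
    exact hbound
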